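/- Let n ≥ 1, let f ∈ ℂ[x_0,…,x_n] be a homogeneous polynomial of degree d ≥ 1, and let y ∈ ℂ^{n+1} be a nonzero vector. Then all partial derivatives ∂f/∂x_0, …, ∂f/∂x_n vanish at y if and only if f belongs to the square P_y² of the ideal P_y ⊆ ℂ[x_0,…,x_n] consisting of all polynomials that vanish at every scalar multiple of y (the homogeneous vanishing ideal of the point [y] ∈ ℙ^n). -/

import Mathlib

open MvPolynomial

/-- `f` is singular at the point `y ∈ ℂ^{n+1}`: all partial derivatives vanish at `y`. -/
def SingularAt {n : ℕ} (f : MvPolynomial (Fin (n+1)) ℂ) (y : Fin (n+1) → ℂ) : Prop :=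
  ∀ i, MvPolynomial.eval y (MvPolynomial.pderiv i f) = 0

/-- The homogeneous vanishing ideal `P_y` of the point `[y] ∈ ℙⁿ`: all polynomials
vanishing at every scalar multiple of `y`. -/
noncomputable def vanishingIdealLine {n : ℕ} (y : Fin (n+1) → ℂ) :
    Ideal (MvPolynomial (Fin (n+1)) ℂ) where
  carrier := {g | ∀ t : ℂ, MvPolynomial.eval (t • y) g = 0}
  zero_mem' := by intro t; simp
  add_mem' := by intro a b ha hb t; simp [map_add, ha t, hb t]
  smul_mem' := by intro c g hg t; simp [smul_eq_mul, map_mul, hg t]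


variable {n : ℕ}

-- helper: sum over univ of s equals d for s in support of homogeneous f
lemma sum_univ_eq_of_coeff_ne_zero {f : MvPolynomial (Fin (n+1)) ℂ} {d : ℕ}
    (hf : f.IsHomogeneous d) {s : Fin (n+1) →₀ ℕ} (hs : coeff s f ≠ 0) :
    ∑ i, s i = d := by
  have h1 := hf hs
  rw [Pi.one_def, ← Finsupp.degree_eq_weight_one] at h1
  rw [← h1, Finsupp.degree_apply]
  exact (Finset.sum_subset (Finset.subset_univ _)
    (fun i _ hi => by simpa using Finsupp.notMem_support_iff.mp hi)).symm

lemma X_mul_pderiv_monomial (i : Fin (n+1)) (s : Fin (n+1) →₀ ℕ) (c : ℂ) :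
    (X i : MvPolynomial (Fin (n+1)) ℂ) * pderiv i (monomial s c) = monomial s (c * s i) := by
  rw [pderiv_monomial]
  rcases Nat.eq_zero_or_pos (s i) with h | h
  · simp [h]
  · rw [X, monomial_mul, one_mul, add_tsub_cancel_of_le (Finsupp.single_le_iff.mpr h)]

lemma euler {f : MvPolynomial (Fin (n+1)) ℂ} {d : ℕ} (hf : f.IsHomogeneous d) :
    ∑ i, (X i : MvPolynomial (Fin (n+1)) ℂ) * pderiv i f = C (d : ℂ) * f := by
  conv_lhs => rw [f.as_sum]
  simp_rw [map_sum, Finset.mul_sum, X_mul_pderiv_monomial]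
  rw [Finset.sum_comm]
  conv_rhs => rw [f.as_sum]
  rw [Finset.mul_sum]
  refine Finset.sum_congr rfl fun s hs => ?_
  rw [← map_sum, ← Finset.mul_sum, C_mul_monomial, mul_comm]
  congr 2
  have h2 := sum_univ_eq_of_coeff_ne_zero hf (mem_support_iff.mp hs)
  rw [← h2]
  push_cast
  ring

lemma eval_smul' {f : MvPolynomial (Fin (n+1)) ℂ} {d : ℕ} (hf : f.IsHomogeneous d)
    (t : ℂ) (y : Fin (n+1) → ℂ) :
    eval (t • y) f = t ^ d * eval y f := by
  conv_lhs => rw [f.as_sum]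
  conv_rhs => rw [f.as_sum]
  rw [map_sum, map_sum, Finset.mul_sum]
  refine Finset.sum_congr rfl fun s hs => ?_
  rw [eval_monomial, eval_monomial, Finsupp.prod, Finsupp.prod]
  simp only [Pi.smul_apply, smul_eq_mul, mul_pow]
  rw [Finset.prod_mul_distrib, Finset.prod_pow_eq_pow_sum]
  have h2 : ∑ i ∈ s.support, s i = d := by
    rw [← sum_univ_eq_of_coeff_ne_zero hf (mem_support_iff.mp hs)]
    exact Finset.sum_subset (Finset.subset_univ _)
      (fun i _ hi => by simpa using Finsupp.notMem_support_iff.mp hi)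
  rw [h2]; ring

lemma pderiv_isHomogeneous {f : MvPolynomial (Fin (n+1)) ℂ} {d : ℕ}
    (hf : f.IsHomogeneous d) (i : Fin (n+1)) :
    (pderiv i f).IsHomogeneous (d - 1) := by
  have hrw : pderiv i f
      = ∑ s ∈ f.support, monomial (s - Finsupp.single i 1) (coeff s f * s i) := by
    conv_lhs => rw [f.as_sum]
    rw [map_sum]
    simp_rw [pderiv_monomial]
  rw [hrw]
  apply IsHomogeneous.sum
  intro s hs
  rcases Nat.eq_zero_or_pos (s i) with h | h
  · simp only [h, Nat.cast_zero, mul_zero]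
    rw [monomial_zero]
    exact isHomogeneous_zero _ _ _
  · apply isHomogeneous_monomial
    have hd := sum_univ_eq_of_coeff_ne_zero hf (mem_support_iff.mp hs)
    rw [← Finset.add_sum_erase _ s (Finset.mem_univ i)] at hd
    have key : ∑ j, ((s - Finsupp.single i 1) : Fin (n+1) →₀ ℕ) j = d - 1 := by
      calc ∑ j, ((s - Finsupp.single i 1) : Fin (n+1) →₀ ℕ) j
          = ∑ j, (s j - (Finsupp.single i 1) j) :=
            Finset.sum_congr rfl fun j _ => Finsupp.tsub_apply s _ j
        _ = (s i - (Finsupp.single i 1) i)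
              + ∑ j ∈ Finset.univ.erase i, (s j - (Finsupp.single i 1) j) :=
            (Finset.add_sum_erase _ _ (Finset.mem_univ i)).symm
        _ = (s i - 1) + ∑ j ∈ Finset.univ.erase i, s j := by
            rw [Finsupp.single_eq_same]
            refine congrArg _ (Finset.sum_congr rfl fun j hj => ?_)
            rw [Finsupp.single_apply, if_neg (Finset.ne_of_mem_erase hj).symm, tsub_zero]
        _ = d - 1 := by omega
    rw [Finsupp.degree_apply, Finset.sum_subset (Finset.subset_univ _)
      (fun j _ hj => by simpa using Finsupp.notMem_support_iff.mp hj)]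
    exact key

lemma aeval_line {g : MvPolynomial (Fin (n+1)) ℂ} {e : ℕ} (hg : g.IsHomogeneous e)
    (m : Fin (n+1) → ℂ) (k : Fin (n+1)) :
    aeval (fun j => C (m j) * X k) g = C (eval m g) * (X k : MvPolynomial (Fin (n+1)) ℂ) ^ e := by
  conv_lhs => rw [g.as_sum]
  conv_rhs => rw [g.as_sum]
  rw [map_sum, map_sum, map_sum, Finset.sum_mul]
  refine Finset.sum_congr rfl fun s hs => ?_
  rw [aeval_monomial, eval_monomial, Finsupp.prod, Finsupp.prod]
  simp only [mul_pow]
  rw [Finset.prod_mul_distrib, Finset.prod_pow_eq_pow_sum]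
  have h2 : ∑ i ∈ s.support, s i = e := by
    rw [← sum_univ_eq_of_coeff_ne_zero hg (mem_support_iff.mp hs)]
    exact Finset.sum_subset (Finset.subset_univ _)
      (fun i _ hi => by simpa using Finsupp.notMem_support_iff.mp hi)
  rw [h2]
  rw [C_mul]
  simp only [algebraMap_eq, ← C_pow, ← map_prod]
  ring

lemma taylor_sq (y : Fin (n+1) → ℂ) (k : Fin (n+1)) (m : Fin (n+1) → ℂ)
    (J : Ideal (MvPolynomial (Fin (n+1)) ℂ))
    (hl : ∀ j, (X j - C (m j) * X k : MvPolynomial (Fin (n+1)) ℂ) ∈ J)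
    (f : MvPolynomial (Fin (n+1)) ℂ) :
    f - aeval (fun j => C (m j) * X k) f
      - ∑ i, (X i - C (m i) * X k) * aeval (fun j => C (m j) * X k) (pderiv i f)
      ∈ J ^ 2 := by
  induction f using MvPolynomial.induction_on with
  | C a =>
      simp only [aeval_C, algebraMap_eq, pderiv_C, map_zero, mul_zero, Finset.sum_const_zero,
        sub_zero, sub_self]
      exact zero_mem _
  | add p q hp hq =>
      have h : (p + q) - aeval (fun j => C (m j) * X k) (p + q)
          - ∑ i, (X i - C (m i) * X k) * aeval (fun j => C (m j) * X k) (pderiv i (p + q))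
          = (p - aeval (fun j => C (m j) * X k) p
              - ∑ i, (X i - C (m i) * X k) * aeval (fun j => C (m j) * X k) (pderiv i p))
            + (q - aeval (fun j => C (m j) * X k) q
              - ∑ i, (X i - C (m i) * X k) * aeval (fun j => C (m j) * X k) (pderiv i q)) := by
        simp only [map_add, mul_add, Finset.sum_add_distrib]
        ring
      rw [h]
      exact add_mem hp hq
  | mul_X p j hp =>
      have hA : ∀ i : Fin (n+1),
          aeval (fun j => C (m j) * X k) (pderiv i (X j : MvPolynomial (Fin (n+1)) ℂ))
            = if i = j then 1 else 0 := by
        intro i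
        rcases eq_or_ne i j with h | h
        · subst h; simp [pderiv_X_self]
        · rw [pderiv_X_of_ne h.symm, map_zero, if_neg h]
      have hsum : ∑ i, (X i - C (m i) * X k)
            * aeval (fun j => C (m j) * X k) (pderiv i (p * X j))
          = (∑ i, (X i - C (m i) * X k) * aeval (fun j => C (m j) * X k) (pderiv i p))
              * (C (m j) * X k)
            + (X j - C (m j) * X k) * aeval (fun j => C (m j) * X k) p := by
        simp only [pderiv_mul, map_add, map_mul, aeval_X, hA, mul_add, Finset.sum_add_distrib]
        congr 1
        · rw [Finset.sum_mul]
          exact Finset.sum_congr rfl fun i _ => (mul_assoc _ _ _).symm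
        · rw [Finset.sum_eq_single j]
          · simp
          · intro i _ hij; simp [hij]
          · intro h; exact absurd (Finset.mem_univ j) h
      rw [map_mul, aeval_X, hsum]
      have hu : (∑ i, (X i - C (m i) * X k)
          * aeval (fun j => C (m j) * X k) (pderiv i p)) ∈ J :=
        Ideal.sum_mem _ fun i _ => Ideal.mul_mem_right _ _ (hl i)
      have key : p * X j
            - aeval (fun j => C (m j) * X k) p * (C (m j) * X k)
            - ((∑ i, (X i - C (m i) * X k) * aeval (fun j => C (m j) * X k) (pderiv i p))
                * (C (m j) * X k)
              + (X j - C (m j) * X k) * aeval (fun j => C (m j) * X k) p)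
          = (X j - C (m j) * X k)
              * (∑ i, (X i - C (m i) * X k) * aeval (fun j => C (m j) * X k) (pderiv i p))
            + X j * (p - aeval (fun j => C (m j) * X k) p
              - ∑ i, (X i - C (m i) * X k) * aeval (fun j => C (m j) * X k) (pderiv i p)) := by
        ring
      rw [key]
      refine add_mem ?_ (Ideal.mul_mem_left _ _ hp)
      rw [pow_two]
      exact Ideal.mul_mem_mul (hl j) hu

lemma mem_vIL {y : Fin (n+1) → ℂ} {g : MvPolynomial (Fin (n+1)) ℂ} :
    g ∈ vanishingIdealLine y ↔ ∀ t : ℂ, eval (t • y) g = 0 := Iff.rfl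

/-- A homogeneous polynomial `f` of degree `d ≥ 1` is singular at a nonzero vector `y` if
and only if `f` lies in the square of the homogeneous vanishing ideal of `[y] ∈ ℙⁿ`. -/
theorem singularAt_iff_mem_sq_vanishingIdeal (n d : ℕ) (hn : 1 ≤ n) (hd : 1 ≤ d)
    (f : MvPolynomial (Fin (n+1)) ℂ) (hf : f.IsHomogeneous d)
    (y : Fin (n+1) → ℂ) (hy : y ≠ 0) :
    SingularAt f y ↔ f ∈ (vanishingIdealLine y) ^ 2 := by
  constructor
  · intro hs
    obtain ⟨k, hk⟩ := Function.ne_iff.mp hy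
    simp only [Pi.zero_apply] at hk
    set m : Fin (n+1) → ℂ := fun j => (y k)⁻¹ * y j with hm
    have hmy : m = (y k)⁻¹ • y := by funext j; simp [hm]
    have hl : ∀ j, (X j - C (m j) * X k : MvPolynomial (Fin (n+1)) ℂ)
        ∈ vanishingIdealLine y := by
      intro j
      rw [mem_vIL]
      intro t
      simp only [map_sub, map_mul, eval_X, eval_C, Pi.smul_apply, smul_eq_mul, hm]
      field_simp
      ring
    have hT := taylor_sq y k m (vanishingIdealLine y) hl f
    have hfy : eval y f = 0 := by
      have hs' : ∀ i, eval y (pderiv i f) = 0 := hs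
      have hE := congrArg (eval y) (euler hf)
      simp only [map_sum, map_mul, eval_X, eval_C, hs', mul_zero,
        Finset.sum_const_zero] at hE
      have hd0 : (d : ℂ) ≠ 0 := Nat.cast_ne_zero.mpr (by omega)
      exact (mul_eq_zero.mp hE.symm).resolve_left hd0
    have hmf : eval m f = 0 := by
      rw [hmy, eval_smul' hf, hfy, mul_zero]
    have hmd : ∀ i, eval m (pderiv i f) = 0 := by
      intro i
      rw [hmy, eval_smul' (pderiv_isHomogeneous hf i), hs i, mul_zero]
    have h1 : aeval (fun j => C (m j) * X k) f = 0 := by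
      rw [aeval_line hf, hmf, map_zero, zero_mul]
    have h2 : ∀ i, aeval (fun j => C (m j) * X k) (pderiv i f) = 0 := fun i => by
      rw [aeval_line (pderiv_isHomogeneous hf i), hmd i, map_zero, zero_mul]
    simp only [h1, h2, mul_zero, Finset.sum_const_zero, sub_zero] at hT
    exact hT
  · intro hmem i
    rw [pow_two] at hmem
    refine Submodule.mul_induction_on hmem ?_ ?_
    · intro a ha b hb
      have ha1 : eval y a = 0 := by have := mem_vIL.mp ha 1; rwa [one_smul] at this
      have hb1 : eval y b = 0 := by have := mem_vIL.mp hb 1; rwa [one_smul] at this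
      rw [pderiv_mul, map_add, map_mul, map_mul, ha1, hb1, mul_zero, zero_mul, add_zero]
    · intro p q hp hq
      rw [map_add, map_add, hp, hq, add_zero]
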